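/- Let O = (0, 0) and P₁ = (x₁, y₁), P₂ = (x₂, y₂), P₃ = (x₃, y₃) be points of ℝ² with 0 ≤ y₁ ≤ y₂ and 0 < y₃ < y₂, and suppose P₁ and P₃ lie strictly on opposite sides of the line through O and P₂ (so the triangles O P₂ P₃ and O P₁ P₂ are nondegenerate and form a hinge glued along the edge O P₂). For t ∈ ℝ let g_t = diag(e^{−t}, e^{t}) act linearly on ℝ². Then there exists T ≥ 0 such that for all t ≥ T, the sum of the two angles opposite the shared edge exceeds π: ∠(g_t·O, g_t·P₃, g_t·P₂) + ∠(g_t·O, g_t·P₁, g_t·P₂) > π, where ∠(A, B, C) denotes the Euclidean angle at the vertex B between the segments BA and BC. In particular, the hinge fails the local Delaunay condition (dihedral angle ≤ π) for all sufficiently large t, i.e. it is not eternally Delaunay. -/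

import Mathlib

open EuclideanGeometry

/-- The point of the Euclidean plane with coordinates `(x, y)`. -/
noncomputable def pt (x y : ℝ) : EuclideanSpace ℝ (Fin 2) := !₂[x, y]

/-- The Teichmüller geodesic flow `g_t = diag(e^{−t}, e^{t})` acting on the
Euclidean plane. -/
noncomputable def gFlow (t : ℝ) (p : EuclideanSpace ℝ (Fin 2)) :
    EuclideanSpace ℝ (Fin 2) :=
  pt (Real.exp (-t) * p 0) (Real.exp t * p 1)

open Real Filter Topology

/-- Auxiliary: the cosine of the flowed angle as algebraic function of `s = e^{-4t}`. -/
noncomputable def Fc (p q u v s : ℝ) : ℝ :=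
  (s * ((0 - p) * (u - p)) + (0 - q) * (v - q)) /
    (Real.sqrt (s * p ^ 2 + q ^ 2) * Real.sqrt (s * (u - p) ^ 2 + (v - q) ^ 2))

lemma pt_apply_zero (x y : ℝ) : pt x y 0 = x := rfl
lemma pt_apply_one (x y : ℝ) : pt x y 1 = y := rfl

lemma cos_angle_flow (t p q u v : ℝ) :
    Real.cos (EuclideanGeometry.angle (gFlow t (pt 0 0)) (gFlow t (pt p q))
      (gFlow t (pt u v))) = Fc p q u v (Real.exp (-(4 * t))) := by
  set r := Real.exp (-t) with hr
  set e := Real.exp t with he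
  have hre : r * e = 1 := by rw [hr, he, ← Real.exp_add]; simp
  have hepos : 0 < e := Real.exp_pos t
  have hs : Real.exp (-(4 * t)) = r ^ 2 / e ^ 2 := by
    rw [hr, he, ← Real.exp_nat_mul, ← Real.exp_nat_mul, ← Real.exp_sub]
    ring_nf
  rw [EuclideanGeometry.angle, InnerProductGeometry.cos_angle]
  have hinner : (inner ℝ ((gFlow t (pt 0 0)) -ᵥ (gFlow t (pt p q)))
      ((gFlow t (pt u v)) -ᵥ (gFlow t (pt p q))) : ℝ) =
      r ^ 2 * ((0 - p) * (u - p)) + e ^ 2 * ((0 - q) * (v - q)) := by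
    simp only [vsub_eq_sub, PiLp.inner_apply, Fin.sum_univ_two, PiLp.sub_apply, gFlow,
      pt_apply_zero, pt_apply_one, RCLike.inner_apply, conj_trivial, ← hr, ← he]
    ring
  have hn1 : ‖(gFlow t (pt 0 0)) -ᵥ (gFlow t (pt p q))‖ =
      Real.sqrt (r ^ 2 * p ^ 2 + e ^ 2 * q ^ 2) := by
    rw [vsub_eq_sub, EuclideanSpace.norm_eq]
    simp only [Fin.sum_univ_two, PiLp.sub_apply, gFlow, pt_apply_zero, pt_apply_one,
      Real.norm_eq_abs, sq_abs, ← hr, ← he]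
    ring_nf
  have hn2 : ‖(gFlow t (pt u v)) -ᵥ (gFlow t (pt p q))‖ =
      Real.sqrt (r ^ 2 * (u - p) ^ 2 + e ^ 2 * (v - q) ^ 2) := by
    rw [vsub_eq_sub, EuclideanSpace.norm_eq]
    simp only [Fin.sum_univ_two, PiLp.sub_apply, gFlow, pt_apply_zero, pt_apply_one,
      Real.norm_eq_abs, sq_abs, ← hr, ← he]
    ring_nf
  rw [hinner, hn1, hn2, hs, Fc]
  have key : ∀ a b : ℝ, Real.sqrt (r ^ 2 * a + e ^ 2 * b) =
      e * Real.sqrt (r ^ 2 / e ^ 2 * a + b) := by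
    intro a b
    have h1 : r ^ 2 * a + e ^ 2 * b = e ^ 2 * (r ^ 2 / e ^ 2 * a + b) := by
      field_simp
    rw [h1, Real.sqrt_mul (sq_nonneg e), Real.sqrt_sq hepos.le]
  rw [key, key]
  have hnum : r ^ 2 * ((0 - p) * (u - p)) + e ^ 2 * ((0 - q) * (v - q)) =
      e ^ 2 * (r ^ 2 / e ^ 2 * ((0 - p) * (u - p)) + (0 - q) * (v - q)) := by
    field_simp
  rw [hnum]
  rw [show e * Real.sqrt (r ^ 2 / e ^ 2 * p ^ 2 + q ^ 2) *
      (e * Real.sqrt (r ^ 2 / e ^ 2 * (u - p) ^ 2 + (v - q) ^ 2)) =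
      e ^ 2 * (Real.sqrt (r ^ 2 / e ^ 2 * p ^ 2 + q ^ 2) *
      Real.sqrt (r ^ 2 / e ^ 2 * (u - p) ^ 2 + (v - q) ^ 2)) from by ring]
  rw [mul_div_mul_left _ _ (by positivity : (e : ℝ) ^ 2 ≠ 0)]

/-- The flow parameter tends to `0` from the right. -/
lemma tendsto_s : Filter.Tendsto (fun t : ℝ => Real.exp (-(4 * t))) Filter.atTop (𝓝[>] 0) := by
  apply tendsto_nhdsWithin_of_tendsto_nhds_of_eventually_within
  · refine Real.tendsto_exp_atBot.comp ?_
    apply Filter.tendsto_atBot.2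
    intro b
    filter_upwards [Filter.eventually_ge_atTop (-b/4)] with t ht
    linarith
  · exact Filter.Eventually.of_forall fun t => Real.exp_pos _

/-- Generic case: cosine tends to a negative limit when both vertical gaps are nonzero. -/
lemma tendsto_Fc_main (p q u v : ℝ) (hq : q ≠ 0) (hvq : v - q ≠ 0) :
    Filter.Tendsto (Fc p q u v) (𝓝[>] (0:ℝ))
      (𝓝 ((0 - q) * (v - q) / (|q| * |v - q|))) := by
  have hcont : ContinuousAt (Fc p q u v) 0 := by
    apply ContinuousAt.div
    · fun_prop
    · fun_prop
    · simp [Real.sqrt_sq_eq_abs, hq, hvq]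
  have h0 : Fc p q u v 0 = (0 - q) * (v - q) / (|q| * |v - q|) := by
    simp [Fc, Real.sqrt_sq_eq_abs]
  have := hcont.tendsto
  rw [h0] at this
  exact this.mono_left nhdsWithin_le_nhds

lemma tendsto_Fc_q_zero (p u v : ℝ) (hp : p ≠ 0) (hv : v ≠ 0) :
    Filter.Tendsto (Fc p 0 u v) (𝓝[>] (0:ℝ)) (𝓝 0) := by
  have heq : ∀ᶠ s in 𝓝[>] (0:ℝ), Real.sqrt s *
      ((0 - p) * (u - p) / (|p| * Real.sqrt (s * (u - p) ^ 2 + v ^ 2))) = Fc p 0 u v s := by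
    filter_upwards [self_mem_nhdsWithin] with s (hs : 0 < s)
    rw [Fc]
    rw [show s * p ^ 2 + 0 ^ 2 = s * p ^ 2 by ring,
      Real.sqrt_mul hs.le, Real.sqrt_sq_eq_abs]
    have hv2 : 0 < v ^ 2 := by rcases hv.lt_or_gt with h | h <;> nlinarith
    have hD : (0:ℝ) < Real.sqrt (s * (u - p) ^ 2 + (v - 0) ^ 2) := by
      apply Real.sqrt_pos.2
      nlinarith [mul_nonneg hs.le (sq_nonneg (u - p))]
    have hc : Real.sqrt s * Real.sqrt s = s := Real.mul_self_sqrt hs.le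
    have hp' : (0:ℝ) < |p| := abs_pos.2 hp
    rw [eq_div_iff (by positivity)]
    have hne : |p| * Real.sqrt (s * (u - p) ^ 2 + (v - 0) ^ 2) ≠ 0 := by positivity
    have hexp : Real.sqrt s * ((0 - p) * (u - p) / (|p| * Real.sqrt (s * (u - p) ^ 2 + v ^ 2))) *
        (Real.sqrt s * |p| * Real.sqrt (s * (u - p) ^ 2 + (v - 0) ^ 2)) =
        (Real.sqrt s * Real.sqrt s) * ((0 - p) * (u - p)) *
          ((|p| * Real.sqrt (s * (u - p) ^ 2 + (v - 0) ^ 2)) /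
            (|p| * Real.sqrt (s * (u - p) ^ 2 + (v - 0) ^ 2))) := by
      rw [show v - 0 = v by ring]; ring
    rw [hexp, div_self hne, hc]
    ring
  apply Filter.Tendsto.congr' heq
  have h1 : Filter.Tendsto Real.sqrt (𝓝[>] (0:ℝ)) (𝓝 0) := by
    have h0 : Filter.Tendsto Real.sqrt (𝓝 (0:ℝ)) (𝓝 0) := by
      simpa using Real.continuous_sqrt.tendsto 0
    exact h0.mono_left nhdsWithin_le_nhds
  have h2 : Filter.Tendsto (fun s => (0 - p) * (u - p) /
      (|p| * Real.sqrt (s * (u - p) ^ 2 + v ^ 2))) (𝓝[>] (0:ℝ))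
      (𝓝 ((0 - p) * (u - p) / (|p| * |v|))) := by
    have hc : ContinuousAt (fun s => (0 - p) * (u - p) /
        (|p| * Real.sqrt (s * (u - p) ^ 2 + v ^ 2))) 0 := by
      apply ContinuousAt.div
      · fun_prop
      · fun_prop
      · simp [Real.sqrt_sq_eq_abs, hp, hv]
    have := hc.tendsto
    simp only [zero_mul, zero_add, Real.sqrt_sq_eq_abs] at this
    exact this.mono_left nhdsWithin_le_nhds
  simpa using h1.mul h2

lemma tendsto_Fc_v_eq_q (p q u : ℝ) (hq : q ≠ 0) (hup : u - p ≠ 0) :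
    Filter.Tendsto (Fc p q u q) (𝓝[>] (0:ℝ)) (𝓝 0) := by
  have heq : ∀ᶠ s in 𝓝[>] (0:ℝ), Real.sqrt s *
      ((0 - p) * (u - p) / (Real.sqrt (s * p ^ 2 + q ^ 2) * |u - p|)) = Fc p q u q s := by
    filter_upwards [self_mem_nhdsWithin] with s (hs : 0 < s)
    rw [Fc]
    rw [show q - q = 0 by ring]
    rw [show s * (u - p) ^ 2 + 0 ^ 2 = s * (u - p) ^ 2 by ring,
      Real.sqrt_mul hs.le, Real.sqrt_sq_eq_abs]
    have hq2 : 0 < q ^ 2 := by rcases hq.lt_or_gt with h | h <;> nlinarith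
    have hD : (0:ℝ) < Real.sqrt (s * p ^ 2 + q ^ 2) := by
      apply Real.sqrt_pos.2
      nlinarith [mul_nonneg hs.le (sq_nonneg p)]
    have hc : Real.sqrt s * Real.sqrt s = s := Real.mul_self_sqrt hs.le
    have hup' : (0:ℝ) < |u - p| := abs_pos.2 hup
    rw [eq_div_iff (by positivity)]
    have hne : Real.sqrt (s * p ^ 2 + q ^ 2) * |u - p| ≠ 0 := by positivity
    have hexp : Real.sqrt s * ((0 - p) * (u - p) / (Real.sqrt (s * p ^ 2 + q ^ 2) * |u - p|)) *
        (Real.sqrt (s * p ^ 2 + q ^ 2) * (Real.sqrt s * |u - p|)) =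
        (Real.sqrt s * Real.sqrt s) * ((0 - p) * (u - p)) *
          ((Real.sqrt (s * p ^ 2 + q ^ 2) * |u - p|) /
            (Real.sqrt (s * p ^ 2 + q ^ 2) * |u - p|)) := by
      ring
    rw [hexp, div_self hne, hc]
    ring
  apply Filter.Tendsto.congr' heq
  have h1 : Filter.Tendsto Real.sqrt (𝓝[>] (0:ℝ)) (𝓝 0) := by
    have h0 : Filter.Tendsto Real.sqrt (𝓝 (0:ℝ)) (𝓝 0) := by
      simpa using Real.continuous_sqrt.tendsto 0
    exact h0.mono_left nhdsWithin_le_nhds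
  have h2 : Filter.Tendsto (fun s => (0 - p) * (u - p) /
      (Real.sqrt (s * p ^ 2 + q ^ 2) * |u - p|)) (𝓝[>] (0:ℝ))
      (𝓝 ((0 - p) * (u - p) / (|q| * |u - p|))) := by
    have hc : ContinuousAt (fun s => (0 - p) * (u - p) /
        (Real.sqrt (s * p ^ 2 + q ^ 2) * |u - p|)) 0 := by
      apply ContinuousAt.div
      · fun_prop
      · fun_prop
      · simp [Real.sqrt_sq_eq_abs, hq, hup]
    have := hc.tendsto
    simp only [zero_mul, zero_add, Real.sqrt_sq_eq_abs] at this
    exact this.mono_left nhdsWithin_le_nhds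
  simpa using h1.mul h2

/-- If the cosines of two angles in `[0, π]` sum to a negative number, the
angles sum to more than `π`. -/
lemma angle_sum_gt_pi {a b : ℝ} (ha0 : 0 ≤ a) (haπ : a ≤ Real.pi)
    (hb0 : 0 ≤ b) (hbπ : b ≤ Real.pi) (h : Real.cos a + Real.cos b < 0) :
    a + b > Real.pi := by
  by_contra hc
  push_neg at hc
  have hle : a ≤ Real.pi - b := by linarith
  have := Real.cos_le_cos_of_nonneg_of_le_pi ha0 (by linarith) hle
  rw [Real.cos_pi_sub] at this
  linarith

/-- A hinge with vertices `O = (0,0)`, `P₁`, `P₂`, `P₃` where `0 ≤ y₁ ≤ y₂`,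
`0 < y₃ < y₂`, and `P₁`, `P₃` lie strictly on opposite sides of the line
`OP₂`, is not eternally Delaunay: for all sufficiently large `t` the sum of
the two angles opposite the shared edge `OP₂` exceeds `π`. -/
theorem hinge_not_eternally_Delaunay
    (x₁ y₁ x₂ y₂ x₃ y₃ : ℝ)
    (h₁ : 0 ≤ y₁) (h₂ : y₁ ≤ y₂) (h₃ : 0 < y₃) (h₄ : y₃ < y₂)
    (hopp : (x₂ * y₁ - x₁ * y₂) * (x₂ * y₃ - x₃ * y₂) < 0) :
    ∃ T : ℝ, 0 ≤ T ∧ ∀ t ≥ T,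
      EuclideanGeometry.angle (gFlow t (pt 0 0)) (gFlow t (pt x₃ y₃)) (gFlow t (pt x₂ y₂)) +
      EuclideanGeometry.angle (gFlow t (pt 0 0)) (gFlow t (pt x₁ y₁)) (gFlow t (pt x₂ y₂)) >
        Real.pi := by
  have hy2 : 0 < y₂ := lt_trans h₃ h₄
  -- the angle at P₃ has cosine tending to -1
  have h3lim : Filter.Tendsto (fun t => Real.cos (EuclideanGeometry.angle
      (gFlow t (pt 0 0)) (gFlow t (pt x₃ y₃)) (gFlow t (pt x₂ y₂)))) Filter.atTop (𝓝 (-1)) := by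
    have := (tendsto_Fc_main x₃ y₃ x₂ y₂ (by intro h; linarith) (by intro h; linarith)).comp tendsto_s
    have hval : (0 - y₃) * (y₂ - y₃) / (|y₃| * |y₂ - y₃|) = -1 := by
      rw [abs_of_pos h₃, abs_of_pos (by linarith : (0:ℝ) < y₂ - y₃)]
      rw [div_eq_iff (ne_of_gt (by nlinarith : (0:ℝ) < y₃ * (y₂ - y₃)))]
      ring
    rw [hval] at this
    apply this.congr
    intro t
    exact (cos_angle_flow t x₃ y₃ x₂ y₂).symm
  -- the angle at P₁ has cosine tending to some L ≤ 0
  have h1lim : ∃ L : ℝ, L ≤ 0 ∧ Filter.Tendsto (fun t => Real.cos (EuclideanGeometry.angle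
      (gFlow t (pt 0 0)) (gFlow t (pt x₁ y₁)) (gFlow t (pt x₂ y₂)))) Filter.atTop (𝓝 L) := by
    rcases eq_or_lt_of_le h₁ with hy10 | hy10
    · -- y₁ = 0, so x₁ ≠ 0
      have hx1 : x₁ ≠ 0 := by
        intro h
        rw [← hy10, h] at hopp
        simp at hopp
      refine ⟨0, le_refl 0, ?_⟩
      have := (tendsto_Fc_q_zero x₁ x₂ y₂ hx1 (by intro h; linarith)).comp tendsto_s
      rw [← hy10]
      apply this.congr
      intro t
      exact (cos_angle_flow t x₁ 0 x₂ y₂).symm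
    rcases eq_or_lt_of_le h₂ with hy12 | hy12
    · -- y₁ = y₂, so x₂ - x₁ ≠ 0
      have hx21 : x₂ - x₁ ≠ 0 := by
        intro h
        have : x₂ * y₁ - x₁ * y₂ = y₂ * (x₂ - x₁) := by rw [hy12]; ring
        rw [this, h, mul_zero, zero_mul] at hopp
        exact lt_irrefl 0 hopp
      refine ⟨0, le_refl 0, ?_⟩
      have := (tendsto_Fc_v_eq_q x₁ y₁ x₂ (by intro h; linarith) hx21).comp tendsto_s
      rw [hy12]
      apply this.congr
      intro t
      rw [← hy12]
      exact (cos_angle_flow t x₁ y₁ x₂ y₁).symm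
    · -- 0 < y₁ < y₂
      refine ⟨(0 - y₁) * (y₂ - y₁) / (|y₁| * |y₂ - y₁|), ?_, ?_⟩
      · rw [abs_of_pos hy10, abs_of_pos (by linarith : (0:ℝ) < y₂ - y₁)]
        apply div_nonpos_of_nonpos_of_nonneg
        · nlinarith
        · nlinarith
      · have := (tendsto_Fc_main x₁ y₁ x₂ y₂ (by intro h; linarith)
          (by intro h; linarith)).comp tendsto_s
        apply this.congr
        intro t
        exact (cos_angle_flow t x₁ y₁ x₂ y₂).symm
  obtain ⟨L, hL, h1lim⟩ := h1lim
  have hev3 := h3lim.eventually_lt_const (by norm_num : (-1:ℝ) < -1/2)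
  have hev1 := h1lim.eventually_lt_const (by linarith : L < 1/2)
  have hev := hev3.and hev1
  rw [Filter.eventually_atTop] at hev
  obtain ⟨T₀, hT₀⟩ := hev
  refine ⟨max T₀ 0, le_max_right _ _, fun t ht => ?_⟩
  have ht0 : T₀ ≤ t := le_trans (le_max_left _ _) ht
  obtain ⟨hc3, hc1⟩ := hT₀ t ht0
  exact angle_sum_gt_pi (EuclideanGeometry.angle_nonneg _ _ _)
    (EuclideanGeometry.angle_le_pi _ _ _) (EuclideanGeometry.angle_nonneg _ _ _)
    (EuclideanGeometry.angle_le_pi _ _ _) (by linarith)
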